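/- Local repetition lemma: Let d be a positive integer and let ε, δ ∈ (0,1). Then for every integer k with k ≥ d/(4·ε²·δ), every string s of length d^k is (d,ε,δ)-locally repetitive. -/

import Mathlib

open Finset
open scoped Classical

/-- The average of the block of `s` of length `len` starting at position `j * len`. -/
noncomputable def blockAvg (s : ℕ → ℝ) (len j : ℕ) : ℝ :=
  (∑ i ∈ Finset.range len, s (j * len + i)) / len

/-- For a string of length `d ^ k`, the level-`ℓ` aligned block with index `j`
(of length `d ^ (k - ℓ)`) is `(d, ε)`-repetitive: the average of each of its `d`
consecutive sub-blocks (which are level-`(ℓ+1)` aligned blocks) is within `ε`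
of the block's average. -/
def blockRep (s : ℕ → ℝ) (d k : ℕ) (ε : ℝ) (ℓ j : ℕ) : Prop :=
  ∀ i ∈ Finset.range d,
    |blockAvg s (d ^ (k - ℓ)) j - blockAvg s (d ^ (k - (ℓ + 1))) (j * d + i)| ≤ ε

/-- The fraction of level-`ℓ` aligned blocks of `s` that are not `(d, ε)`-repetitive. -/
noncomputable def badFrac (s : ℕ → ℝ) (d k : ℕ) (ε : ℝ) (ℓ : ℕ) : ℝ :=
  (((Finset.range (d ^ ℓ)).filter (fun j => ¬ blockRep s d k ε ℓ j)).card : ℝ) / (d ^ ℓ : ℝ)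

/-- Decomposing a sum over `range (a*b)` into a double sum. -/
lemma sum_range_mul_aux (f : ℕ → ℝ) (a b : ℕ) :
    ∑ x ∈ Finset.range (a*b), f x = ∑ j ∈ Finset.range a, ∑ i ∈ Finset.range b, f (j*b+i) := by
  induction a with
  | zero => simp
  | succ n ih =>
    rw [Finset.sum_range_succ, ← ih, Nat.succ_mul, Finset.sum_range_add]

/-- The "energy" at level `ℓ`: the mean square of the level-`ℓ` block averages. -/
noncomputable def energy (s : ℕ → ℝ) (d k ℓ : ℕ) : ℝ :=
  (∑ j ∈ Finset.range (d ^ ℓ), (blockAvg s (d ^ (k - ℓ)) j) ^ 2) / (d ^ ℓ : ℝ)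

lemma var_identity (d : ℕ) (hd : 0 < d) (a : ℕ → ℝ) :
    (∑ i ∈ Finset.range d, (a i) ^ 2) / d - ((∑ i ∈ Finset.range d, a i) / d) ^ 2
      = (∑ i ∈ Finset.range d, (a i - (∑ i ∈ Finset.range d, a i) / d) ^ 2) / d := by
  have hd' : (d : ℝ) ≠ 0 := Nat.cast_ne_zero.mpr hd.ne'
  set m := (∑ i ∈ Finset.range d, a i) / d with hm
  have hsum : ∑ i ∈ Finset.range d, a i = d * m := by
    rw [hm]; field_simp
  have hexp : ∑ i ∈ Finset.range d, (a i - m) ^ 2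
      = (∑ i ∈ Finset.range d, (a i) ^ 2) - 2 * m * (∑ i ∈ Finset.range d, a i)
        + d * m ^ 2 := by
    have h1 : ∀ i ∈ Finset.range d, (a i - m) ^ 2 = a i ^ 2 - 2 * m * a i + m ^ 2 :=
      fun i _ => by ring
    rw [Finset.sum_congr rfl h1, Finset.sum_add_distrib, Finset.sum_sub_distrib,
      ← Finset.mul_sum, Finset.sum_const, Finset.card_range, nsmul_eq_mul]
  rw [hexp, hsum]
  field_simp
  ring

/-- Per-level energy increment. -/
lemma level_step (s : ℕ → ℝ) (d k : ℕ) (hd : 0 < d) (ε : ℝ) (hε : 0 < ε)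
    (ℓ : ℕ) (hℓ : ℓ < k) :
    badFrac s d k ε ℓ * (ε ^ 2 / d) ≤ energy s d k (ℓ+1) - energy s d k ℓ := by
  have hd' : (0:ℝ) < (d:ℝ) := Nat.cast_pos.mpr hd
  set L := d ^ (k - (ℓ+1)) with hL
  have hLpos : 0 < L := Nat.pow_pos hd
  have hL' : (0:ℝ) < (L:ℝ) := Nat.cast_pos.mpr hLpos
  have hkl : k - ℓ = (k - (ℓ+1)) + 1 := by omega
  have hlen : d ^ (k - ℓ) = d * L := by
    rw [hkl, pow_succ, hL]; ring
  -- block average decomposition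
  have havg : ∀ j, blockAvg s (d ^ (k - ℓ)) j
      = (∑ i ∈ Finset.range d, blockAvg s L (j * d + i)) / d := by
    intro j
    unfold blockAvg
    rw [hlen, sum_range_mul_aux (fun x => s (j * (d * L) + x)) d L]
    rw [← Finset.sum_div, div_div]
    push_cast
    congr 1
    · apply Finset.sum_congr rfl
      intro i _
      apply Finset.sum_congr rfl
      intro q _
      congr 1
      ring
    · push_cast
      ring
  -- variance lower bound per block
  set a : ℕ → ℕ → ℝ := fun j i => blockAvg s L (j * d + i) with ha
  set V : ℕ → ℝ := fun j =>
    (∑ i ∈ Finset.range d, (a j i) ^ 2) / d - (blockAvg s (d ^ (k - ℓ)) j) ^ 2 with hV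
  have hVid : ∀ j, V j = (∑ i ∈ Finset.range d,
      (a j i - (∑ i ∈ Finset.range d, a j i) / d) ^ 2) / d := by
    intro j
    rw [hV]
    simp only
    rw [havg j, var_identity d hd (a j)]
  have hVnonneg : ∀ j, 0 ≤ V j := by
    intro j
    rw [hVid j]
    positivity
  have hVbad : ∀ j, ¬ blockRep s d k ε ℓ j → ε ^ 2 / d ≤ V j := by
    intro j hbad
    rw [blockRep] at hbad
    push_neg at hbad
    obtain ⟨i, hi, hdev⟩ := hbad
    rw [hVid j]
    gcongr
    have h1 : |blockAvg s (d ^ (k - ℓ)) j - a j i|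
        = |a j i - (∑ i ∈ Finset.range d, a j i) / d| := by
      rw [havg j, abs_sub_comm]
    have h2 : ε ≤ |a j i - (∑ i ∈ Finset.range d, a j i) / d| := by
      rw [← h1]; exact le_of_lt hdev
    calc ε ^ 2 ≤ |a j i - (∑ i ∈ Finset.range d, a j i) / d| ^ 2 :=
          pow_le_pow_left₀ hε.le h2 2
      _ = (a j i - (∑ i ∈ Finset.range d, a j i) / d) ^ 2 := sq_abs _
      _ ≤ ∑ i' ∈ Finset.range d, (a j i' - (∑ i ∈ Finset.range d, a j i) / d) ^ 2 :=
          Finset.single_le_sum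
            (f := fun i' => (a j i' - (∑ i ∈ Finset.range d, a j i) / (d:ℝ)) ^ 2)
            (fun i' _ => sq_nonneg _) hi
  -- energy at level ℓ+1 decomposed
  have hE1 : energy s d k (ℓ+1)
      = (∑ j ∈ Finset.range (d ^ ℓ), (∑ i ∈ Finset.range d, (a j i) ^ 2) / d) / (d ^ ℓ : ℝ) := by
    unfold energy
    rw [pow_succ, sum_range_mul_aux (fun x => (blockAvg s (d ^ (k - (ℓ+1))) x) ^ 2) (d ^ ℓ) d]
    rw [← Finset.sum_div, div_div, ← pow_succ']
  have hdiff : energy s d k (ℓ+1) - energy s d k ℓ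
      = (∑ j ∈ Finset.range (d ^ ℓ), V j) / (d ^ ℓ : ℝ) := by
    rw [hE1]
    unfold energy
    rw [div_sub_div_same, ← Finset.sum_sub_distrib]
  rw [hdiff]
  have hdl : (0:ℝ) < (d:ℝ) ^ ℓ := by positivity
  rw [badFrac, div_mul_eq_mul_div]
  gcongr
  calc (((Finset.range (d ^ ℓ)).filter (fun j => ¬ blockRep s d k ε ℓ j)).card : ℝ) * (ε ^ 2 / d)
      = ∑ j ∈ (Finset.range (d ^ ℓ)).filter (fun j => ¬ blockRep s d k ε ℓ j), (ε ^ 2 / d) := by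
        rw [Finset.sum_const, nsmul_eq_mul]
    _ ≤ ∑ j ∈ (Finset.range (d ^ ℓ)).filter (fun j => ¬ blockRep s d k ε ℓ j), V j := by
        apply Finset.sum_le_sum
        intro j hj
        exact hVbad j (Finset.mem_filter.mp hj).2
    _ ≤ ∑ j ∈ Finset.range (d ^ ℓ), V j := by
        apply Finset.sum_le_sum_of_subset_of_nonneg (Finset.filter_subset _ _)
        intro j hj _
        exact hVnonneg j

theorem local_repetition_lemma (d : ℕ) (hd : 0 < d) (ε δ : ℝ)
    (hε : ε ∈ Set.Ioo (0 : ℝ) 1) (hδ : δ ∈ Set.Ioo (0 : ℝ) 1)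
    (k : ℕ) (hk : (d : ℝ) / (4 * ε ^ 2 * δ) ≤ k)
    (s : ℕ → ℝ) (hs : ∀ i < d ^ k, s i ∈ Set.Icc (0 : ℝ) 1) :
    (1 / k : ℝ) * ∑ ℓ ∈ Finset.range k, badFrac s d k ε ℓ ≤ δ := by
  obtain ⟨hε0, hε1⟩ := hε
  obtain ⟨hδ0, hδ1⟩ := hδ
  have hd' : (0:ℝ) < (d:ℝ) := Nat.cast_pos.mpr hd
  have hpos : (0:ℝ) < (d:ℝ) / (4 * ε ^ 2 * δ) := by positivity
  have hk0 : 0 < k := by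
    rcases Nat.eq_zero_or_pos k with h | h
    · exfalso; rw [h] at hk; push_cast at hk; linarith
    · exact h
  have hk' : (0:ℝ) < (k:ℝ) := Nat.cast_pos.mpr hk0
  -- telescoping
  have htel : ∑ ℓ ∈ Finset.range k, (energy s d k (ℓ+1) - energy s d k ℓ)
      = energy s d k k - energy s d k 0 := Finset.sum_range_sub _ _
  have hstep : ∑ ℓ ∈ Finset.range k, badFrac s d k ε ℓ * (ε ^ 2 / d)
      ≤ energy s d k k - energy s d k 0 := by
    rw [← htel]
    apply Finset.sum_le_sum
    intro ℓ hℓ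
    exact level_step s d k hd ε hε0 ℓ (Finset.mem_range.mp hℓ)
  -- bound energy difference by 1/4
  set μ := (∑ i ∈ Finset.range (d ^ k), s i) / ((d:ℝ) ^ k) with hμ
  have hdk : (0:ℝ) < ((d:ℝ) ^ k) := by positivity
  have hμ0 : 0 ≤ μ := by
    apply div_nonneg _ hdk.le
    exact Finset.sum_nonneg (fun i hi => (hs i (Finset.mem_range.mp hi)).1)
  have hμ1 : μ ≤ 1 := by
    rw [hμ, div_le_one hdk]
    calc ∑ i ∈ Finset.range (d ^ k), s i ≤ ∑ i ∈ Finset.range (d ^ k), 1 :=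
          Finset.sum_le_sum (fun i hi => (hs i (Finset.mem_range.mp hi)).2)
      _ = ((d:ℝ) ^ k) := by push_cast; simp
  have hE0 : energy s d k 0 = μ ^ 2 := by
    unfold energy blockAvg
    simp [hμ]
  have hEk : energy s d k k ≤ μ := by
    unfold energy
    rw [hμ]
    apply (div_le_div_iff_of_pos_right hdk).mpr
    apply Finset.sum_le_sum
    intro j hj
    have hjk := Finset.mem_range.mp hj
    have hb : blockAvg s (d ^ (k - k)) j = s j := by
      unfold blockAvg
      simp [Nat.sub_self]
    rw [hb]
    obtain ⟨h0, h1⟩ := hs j hjk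
    nlinarith
  have hEdiff : energy s d k k - energy s d k 0 ≤ 1/4 := by
    rw [hE0]
    nlinarith [hEk, hμ0, hμ1, sq_nonneg (μ - 1/2)]
  -- combine
  have hc : (0:ℝ) < ε ^ 2 / d := by positivity
  have hS : (∑ ℓ ∈ Finset.range k, badFrac s d k ε ℓ) * (ε ^ 2 / d) ≤ 1/4 := by
    rw [Finset.sum_mul]
    exact le_trans hstep hEdiff
  have hSd : ∑ ℓ ∈ Finset.range k, badFrac s d k ε ℓ ≤ (d:ℝ) / (4 * ε ^ 2) := by
    have h1 : ∑ ℓ ∈ Finset.range k, badFrac s d k ε ℓ ≤ (1/4) / (ε ^ 2 / d) :=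
      (le_div_iff₀ hc).mpr hS
    have h2 : (1/4 : ℝ) / (ε ^ 2 / d) = (d:ℝ) / (4 * ε ^ 2) := by
      field_simp
    rwa [h2] at h1
  have hδk : (d:ℝ) / (4 * ε ^ 2) ≤ δ * k := by
    have := mul_le_mul_of_nonneg_left hk hδ0.le
    have heq : δ * ((d:ℝ) / (4 * ε ^ 2 * δ)) = (d:ℝ) / (4 * ε ^ 2) := by
      field_simp
    linarith [heq ▸ this]
  calc (1 / k : ℝ) * ∑ ℓ ∈ Finset.range k, badFrac s d k ε ℓ
      ≤ (1 / k : ℝ) * (δ * k) := by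
        apply mul_le_mul_of_nonneg_left (le_trans hSd hδk)
        positivity
    _ = δ := by field_simp
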